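/- Let (T_n(t))_{t>0}, n ∈ ℕ, be a sequence of positive semigroups of kernel operators on a Polish space E, all bounded by a common constant M, increasing in n (T_n(t) ≤ T_{n+1}(t) for all n and t > 0), let (T(t))_{t>0} be the limit semigroup given by (T(t)f)(x) = lim_{n→∞}(T_n(t)f)(x), and let (R_n(λ))_{λ>0} and (R(λ))_{λ>0} be the Laplace transforms of T_n and T. Say that a pair (u,f) ∈ B_b(E) × B_b(E) belongs to the full generator A of T if R(1)(u − f) = u, and that (u_n, f_n) belongs to the full generator A_n of T_n if R_n(1)(u_n − f_n) = u_n. Then (u,f) ∈ A if and only if there exist sequences (u_n)_{n∈ℕ} and (f_n)_{n∈ℕ} in B_b(E) with (u_n, f_n) ∈ A_n for every n, sup_{n∈ℕ}(‖u_n‖_∞ + ‖f_n‖_∞) < ∞, and u_n(x) → u(x) and f_n(x) → f(x) for every x ∈ E. -/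

import Mathlib

open MeasureTheory Filter Topology

/-- `f` is a bounded Borel measurable real-valued function. -/
def IsBb {E : Type*} [MeasurableSpace E] (f : E → ℝ) : Prop :=
  Measurable f ∧ ∃ C : ℝ, ∀ x, |f x| ≤ C

/-- `f` is a bounded continuous real-valued function. -/
def IsCb {E : Type*} [TopologicalSpace E] (f : E → ℝ) : Prop :=
  Continuous f ∧ ∃ C : ℝ, ∀ x, |f x| ≤ C

/-- The kernel operator associated with a kernel `k : E → Measure E`. -/
noncomputable def kOp {E : Type*} [MeasurableSpace E] (k : E → Measure E) (f : E → ℝ) (x : E) : ℝ :=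
  ∫ y, f y ∂(k x)

/-- `(k t)_{t>0}` is a positive semigroup of kernels on `E`, bounded by `M`:
measurability in `x`, total mass bounded by `M`, Chapman–Kolmogorov, and joint
measurability of `(t,x) ↦ (T(t)f)(x)` on `(0,∞) × E` for bounded measurable `f`. -/
def IsKernelSemigroup {E : Type*} [MeasurableSpace E] (k : ℝ → E → Measure E) (M : NNReal) : Prop :=
  (∀ t, 0 < t → ∀ A : Set E, MeasurableSet A → Measurable fun x => k t x A) ∧
  (∀ t, 0 < t → ∀ x, k t x Set.univ ≤ (M : ENNReal)) ∧
  (∀ t, 0 < t → ∀ s, 0 < s → ∀ x, ∀ A : Set E, MeasurableSet A →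
    k (t + s) x A = ∫⁻ y, k s y A ∂(k t x)) ∧
  (∀ f : E → ℝ, IsBb f → Measurable fun p : Set.Ioi (0:ℝ) × E => kOp (k p.1.1) f p.2)

/-- The Laplace transform (pseudo-resolvent) of the semigroup of kernel operators. -/
noncomputable def laplaceOp {E : Type*} [MeasurableSpace E]
    (k : ℝ → E → Measure E) (l : ℝ) (f : E → ℝ) (x : E) : ℝ :=
  ∫ t in Set.Ioi (0:ℝ), Real.exp (-l * t) * kOp (k t) f x
open Set

lemma IsBb.sub' {E : Type*} [MeasurableSpace E] {u f : E → ℝ} (hu : IsBb u) (hf : IsBb f) :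
    IsBb fun y => u y - f y := by
  obtain ⟨hum, Cu, hCu⟩ := hu; obtain ⟨hfm, Cf, hCf⟩ := hf
  exact ⟨hum.sub hfm, Cu + Cf, fun x => (abs_sub _ _).trans (add_le_add (hCu x) (hCf x))⟩

lemma IsBb.bound {E : Type*} [MeasurableSpace E] {f : E → ℝ} (hf : IsBb f) :
    ∃ C, 0 ≤ C ∧ ∀ x, |f x| ≤ C := by
  obtain ⟨-, C, hC⟩ := hf
  exact ⟨max C 0, le_max_right _ _, fun x => (hC x).trans (le_max_left _ _)⟩

lemma integrable_of_bound {E : Type*} [MeasurableSpace E] (μ : Measure E) [IsFiniteMeasure μ]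
    {g : E → ℝ} {C : ℝ} (hg : Measurable g) (hb : ∀ x, |g x| ≤ C) : Integrable g μ :=
  (integrable_const C).mono' hg.aestronglyMeasurable
    (ae_of_all _ fun x => by simpa [Real.norm_eq_abs] using hb x)

lemma abs_kOp_le {E : Type*} [MeasurableSpace E] {μ : Measure E} {M : NNReal}
    (hμ : μ Set.univ ≤ (M : ENNReal)) {g : E → ℝ} {C : ℝ}
    (hC : 0 ≤ C) (hb : ∀ x, |g x| ≤ C) : |∫ y, g y ∂μ| ≤ C * M := by
  have : IsFiniteMeasure μ := ⟨lt_of_le_of_lt hμ ENNReal.coe_lt_top⟩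
  have h1 : |∫ y, g y ∂μ| ≤ C * (μ Set.univ).toReal := by
    simpa [Real.norm_eq_abs, Measure.real] using
      norm_integral_le_of_norm_le_const (μ := μ) (f := g)
        (ae_of_all _ fun x => by simpa [Real.norm_eq_abs] using hb x)
  refine h1.trans (mul_le_mul_of_nonneg_left ?_ hC)
  simpa using ENNReal.toReal_mono (by simp) hμ

lemma exists_kOp_ext {E : Type*} [MeasurableSpace E] (k : ℝ → E → Measure E) {g : E → ℝ}
    (h4 : Measurable fun p : Set.Ioi (0:ℝ) × E => kOp (k p.1.1) g p.2) :
    ∃ G : ℝ × E → ℝ, Measurable G ∧ ∀ t, 0 < t → ∀ x : E, G (t, x) = kOp (k t) g x := by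
  have hemb : MeasurableEmbedding (Prod.map (Subtype.val : Set.Ioi (0:ℝ) → ℝ) (id : E → E)) :=
    (MeasurableEmbedding.subtype_coe measurableSet_Ioi).prodMap MeasurableEmbedding.id
  refine ⟨Function.extend (Prod.map Subtype.val id) (fun p => kOp (k p.1.1) g p.2) 0,
    hemb.measurable_extend h4 measurable_const, ?_⟩
  intro t ht x
  have h : (t, x) = Prod.map (Subtype.val : Set.Ioi (0:ℝ) → ℝ) (id : E → E) (⟨t, ht⟩, x) := rfl
  rw [h, hemb.injective.extend_apply]

lemma laplaceOp_eq_ext {E : Type*} [MeasurableSpace E] {k : ℝ → E → Measure E} {g : E → ℝ}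
    {G : ℝ × E → ℝ} (hG : ∀ t, 0 < t → ∀ x, G (t, x) = kOp (k t) g x) (x : E) :
    laplaceOp k 1 g x = ∫ t in Set.Ioi (0:ℝ), Real.exp (-1 * t) * G (t, x) := by
  refine setIntegral_congr_fun measurableSet_Ioi fun t ht => ?_
  rw [hG t ht x]

lemma measurable_laplace {E : Type*} [MeasurableSpace E] {k : ℝ → E → Measure E} {g : E → ℝ}
    {G : ℝ × E → ℝ} (hGm : Measurable G)
    (hG : ∀ t, 0 < t → ∀ x, G (t, x) = kOp (k t) g x) :
    Measurable fun x => laplaceOp k 1 g x := by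
  have heq : (fun x => laplaceOp k 1 g x)
      = fun x => ∫ t in Set.Ioi (0:ℝ), Real.exp (-1 * t) * G (t, x) :=
    funext fun x => laplaceOp_eq_ext hG x
  rw [heq]
  have hm : StronglyMeasurable
      (Function.uncurry fun (t : ℝ) (x : E) => Real.exp (-1 * t) * G (t, x)) := by
    apply Measurable.stronglyMeasurable
    exact (Real.measurable_exp.comp (measurable_fst.const_mul (-1))).mul hGm
  exact (hm.integral_prod_left (μ := volume.restrict (Set.Ioi (0:ℝ)))).measurable

lemma abs_laplace_le {E : Type*} [MeasurableSpace E] {k : ℝ → E → Measure E} {M : NNReal}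
    (hmass : ∀ t, 0 < t → ∀ x, k t x Set.univ ≤ (M : ENNReal))
    {g : E → ℝ} {C : ℝ} (hC : 0 ≤ C) (hb : ∀ y, |g y| ≤ C) (x : E) :
    |laplaceOp k 1 g x| ≤ C * M := by
  have hbd : Integrable (fun t => Real.exp (-1 * t) * (C * M))
      (volume.restrict (Set.Ioi (0:ℝ))) := (exp_neg_integrableOn_Ioi 0 one_pos).mul_const _
  have h1 : |laplaceOp k 1 g x|
      ≤ ∫ t in Set.Ioi (0:ℝ), Real.exp (-1 * t) * (C * M) := by
    rw [laplaceOp]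
    have hae : ∀ᵐ t ∂(volume.restrict (Set.Ioi (0:ℝ))),
        ‖Real.exp (-1 * t) * kOp (k t) g x‖ ≤ Real.exp (-1 * t) * (C * M) := by
      refine (ae_restrict_iff' measurableSet_Ioi).mpr (ae_of_all _ fun t ht => ?_)
      rw [Real.norm_eq_abs, abs_mul, abs_of_pos (Real.exp_pos _)]
      exact mul_le_mul_of_nonneg_left (abs_kOp_le (hmass t ht x) hC hb) (Real.exp_pos _).le
    simpa [Real.norm_eq_abs] using norm_integral_le_of_norm_le hbd hae
  have h2 : ∫ t in Set.Ioi (0:ℝ), Real.exp (-1 * t) * (C * M) = C * M := by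
    simp only [neg_one_mul]
    rw [MeasureTheory.integral_mul_const, integral_exp_neg_Ioi]
    simp
  rw [h2] at h1
  exact h1

lemma laplace_tendsto {E : Type*} [MeasurableSpace E]
    {kseq : ℕ → ℝ → E → Measure E} {klim : ℝ → E → Measure E} {M : NNReal}
    (hmass : ∀ n t, 0 < t → ∀ x, kseq n t x Set.univ ≤ (M : ENNReal))
    {gseq : ℕ → E → ℝ} {g : E → ℝ} {C : ℝ} (hC : 0 ≤ C)
    (hgb : ∀ n y, |gseq n y| ≤ C)
    {Gseq : ℕ → ℝ × E → ℝ} (hGm : ∀ n, Measurable (Gseq n))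
    (hG : ∀ n t, 0 < t → ∀ x, Gseq n (t, x) = kOp (kseq n t) (gseq n) x)
    {Glim : ℝ × E → ℝ} (hGlim : ∀ t, 0 < t → ∀ x, Glim (t, x) = kOp (klim t) g x)
    (x : E)
    (hconv : ∀ t, 0 < t → Tendsto (fun n => kOp (kseq n t) (gseq n) x) atTop
      (𝓝 (kOp (klim t) g x))) :
    Tendsto (fun n => laplaceOp (kseq n) 1 (gseq n) x) atTop (𝓝 (laplaceOp klim 1 g x)) := by
  have heq : ∀ n, laplaceOp (kseq n) 1 (gseq n) x
      = ∫ t in Set.Ioi (0:ℝ), Real.exp (-1 * t) * Gseq n (t, x) :=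
    fun n => laplaceOp_eq_ext (hG n) x
  have heq' : laplaceOp klim 1 g x
      = ∫ t in Set.Ioi (0:ℝ), Real.exp (-1 * t) * Glim (t, x) := laplaceOp_eq_ext hGlim x
  simp only [heq, heq']
  refine tendsto_integral_of_dominated_convergence (fun t => Real.exp (-1 * t) * (C * M))
    (fun n => ?_) ((exp_neg_integrableOn_Ioi 0 one_pos).mul_const _) (fun n => ?_) ?_
  · exact ((Real.measurable_exp.comp (measurable_id.const_mul (-1))).mul
      ((hGm n).comp (measurable_id.prodMk measurable_const))).aestronglyMeasurable
  · refine (ae_restrict_iff' measurableSet_Ioi).mpr (ae_of_all _ fun t ht => ?_)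
    rw [Real.norm_eq_abs, abs_mul, abs_of_pos (Real.exp_pos _), hG n t ht x]
    exact mul_le_mul_of_nonneg_left (abs_kOp_le (hmass n t ht x) hC (hgb n)) (Real.exp_pos _).le
  · refine (ae_restrict_iff' measurableSet_Ioi).mpr (ae_of_all _ fun t ht => ?_)
    simp only [fun n => hG n t ht x, hGlim t ht x]
    exact (tendsto_const_nhds).mul (hconv t ht)

lemma integral_tendsto_meas {E : Type*} [MeasurableSpace E]
    {μ : ℕ → Measure E} {ν : Measure E} {M : NNReal}
    (hν : ν Set.univ ≤ (M : ENNReal)) (hμν : ∀ n, μ n ≤ ν)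
    {gseq : ℕ → E → ℝ} {g : E → ℝ} {C : ℝ}
    (hgm : ∀ n, Measurable (gseq n)) (hgb : ∀ n y, |gseq n y| ≤ C)
    (hg : Measurable g) (hgb' : ∀ y, |g y| ≤ C)
    (hptw : ∀ y, Tendsto (fun n => gseq n y) atTop (𝓝 (g y)))
    (hbase : Tendsto (fun n => ∫ y, g y ∂(μ n)) atTop (𝓝 (∫ y, g y ∂ν))) :
    Tendsto (fun n => ∫ y, gseq n y ∂(μ n)) atTop (𝓝 (∫ y, g y ∂ν)) := by
  have hνfin : IsFiniteMeasure ν := ⟨lt_of_le_of_lt hν ENNReal.coe_lt_top⟩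
  have hμfin : ∀ n, IsFiniteMeasure (μ n) :=
    fun n => ⟨lt_of_le_of_lt (le_trans ((hμν n) Set.univ) hν) ENNReal.coe_lt_top⟩
  have hdiffint : ∀ n, Integrable (fun y => |gseq n y - g y|) ν := by
    intro n
    refine integrable_of_bound ν ((hgm n).sub hg).abs (C := C + C) fun y => ?_
    rw [abs_abs]
    exact (abs_sub _ _).trans (add_le_add (hgb n y) (hgb' y))
  have hdiff : Tendsto (fun n => ∫ y, |gseq n y - g y| ∂ν) atTop (𝓝 0) := by
    have h0 : (0:ℝ) = ∫ y, (0:ℝ) ∂ν := by simp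
    rw [h0]
    refine tendsto_integral_of_dominated_convergence (fun _ => C + C)
      (fun n => ((hgm n).sub hg).abs.aestronglyMeasurable) (integrable_const _)
      (fun n => ae_of_all _ fun y => ?_) (ae_of_all _ fun y => ?_)
    · rw [Real.norm_eq_abs, abs_abs]
      exact (abs_sub _ _).trans (add_le_add (hgb n y) (hgb' y))
    · have : Tendsto (fun n => gseq n y - g y) atTop (𝓝 (g y - g y)) :=
        (hptw y).sub tendsto_const_nhds
      rw [sub_self] at this
      simpa using this.abs
  have key : ∀ n, |∫ y, gseq n y ∂(μ n) - ∫ y, g y ∂(μ n)| ≤ ∫ y, |gseq n y - g y| ∂ν := by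
    intro n
    have := hμfin n
    have i1 : Integrable (gseq n) (μ n) := integrable_of_bound _ (hgm n) (hgb n)
    have i2 : Integrable g (μ n) := integrable_of_bound _ hg hgb'
    rw [← integral_sub i1 i2]
    have habs : |∫ y, (gseq n y - g y) ∂(μ n)| ≤ ∫ y, |gseq n y - g y| ∂(μ n) := by
      simpa [Real.norm_eq_abs] using
        norm_integral_le_integral_norm (μ := μ n) (fun y => gseq n y - g y)
    exact habs.trans
      (integral_mono_measure (hμν n) (ae_of_all _ fun y => abs_nonneg _) (hdiffint n))
  have hz : Tendsto (fun n => ∫ y, gseq n y ∂(μ n) - ∫ y, g y ∂(μ n)) atTop (𝓝 0) :=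
    squeeze_zero_norm (fun n => by simpa [Real.norm_eq_abs] using key n) hdiff
  have := hz.add hbase
  rw [zero_add] at this
  simpa using this

lemma kseq_le_klim {E : Type*} [MeasurableSpace E]
    {kseq : ℕ → ℝ → E → Measure E} {klim : ℝ → E → Measure E} {M : NNReal}
    (hsg : ∀ n, IsKernelSemigroup (kseq n) M)
    (hmono : ∀ n, ∀ t, 0 < t → ∀ x, ∀ A : Set E, MeasurableSet A →
      kseq n t x A ≤ kseq (n + 1) t x A)
    (hlimsg : IsKernelSemigroup klim M)
    (hlim : ∀ f : E → ℝ, IsBb f → ∀ t, 0 < t → ∀ x,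
      Tendsto (fun n => kOp (kseq n t) f x) atTop (𝓝 (kOp (klim t) f x)))
    (n : ℕ) (t : ℝ) (ht : 0 < t) (x : E) : kseq n t x ≤ klim t x := by
  rw [Measure.le_iff]
  intro A hA
  have hindBb : IsBb (A.indicator fun _ => (1:ℝ)) := by
    refine ⟨measurable_const.indicator hA, 1, fun y => ?_⟩
    by_cases h : y ∈ A <;> simp [Set.indicator_apply, h]
  have htoReal : ∀ μ : Measure E, ∫ y, A.indicator (fun _ => (1:ℝ)) y ∂μ = (μ A).toReal := by
    intro μ; simpa [Measure.real] using integral_indicator_const (1:ℝ) hA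
  have hT : Tendsto (fun m => (kseq m t x A).toReal) atTop (𝓝 ((klim t x A).toReal)) := by
    simpa [kOp, htoReal] using hlim _ hindBb t ht x
  have hfin : ∀ m, kseq m t x A ≠ ⊤ := fun m =>
    (lt_of_le_of_lt (le_trans (measure_mono (Set.subset_univ A)) ((hsg m).2.1 t ht x))
      ENNReal.coe_lt_top).ne
  have hfinlim : klim t x A ≠ ⊤ :=
    (lt_of_le_of_lt (le_trans (measure_mono (Set.subset_univ A)) (hlimsg.2.1 t ht x))
      ENNReal.coe_lt_top).ne
  have hmonoT : Monotone fun m => (kseq m t x A).toReal :=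
    monotone_nat_of_le_succ fun m => ENNReal.toReal_mono (hfin (m+1)) (hmono m t ht x A hA)
  have hle : (kseq n t x A).toReal ≤ (klim t x A).toReal := hmonoT.ge_of_tendsto hT n
  exact (ENNReal.toReal_le_toReal (hfin n) hfinlim).mp hle

/-- Characterisation of the full generator of the limit semigroup of an increasing,
uniformly bounded sequence of positive semigroups of kernel operators: `(u,f)`
belongs to the full generator of the limit semigroup iff there are uniformly bounded
pairs `(u_n, f_n)` in the full generators of the approximating semigroups converging
pointwise to `(u, f)`. -/
theorem full_generator_of_limit_semigroup
    {E : Type*} [TopologicalSpace E] [PolishSpace E] [MeasurableSpace E] [BorelSpace E]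
    (kseq : ℕ → ℝ → E → Measure E) (klim : ℝ → E → Measure E) (M : NNReal)
    (hsg : ∀ n, IsKernelSemigroup (kseq n) M)
    (hmono : ∀ n, ∀ t, 0 < t → ∀ x, ∀ A : Set E, MeasurableSet A →
      kseq n t x A ≤ kseq (n + 1) t x A)
    (hlimsg : IsKernelSemigroup klim M)
    (hlim : ∀ f : E → ℝ, IsBb f → ∀ t, 0 < t → ∀ x,
      Tendsto (fun n => kOp (kseq n t) f x) atTop (𝓝 (kOp (klim t) f x)))
    (u f : E → ℝ) (hu : IsBb u) (hf : IsBb f) :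
    (∀ x, laplaceOp klim 1 (fun y => u y - f y) x = u x) ↔
      ∃ useq fseq : ℕ → E → ℝ,
        (∀ n, IsBb (useq n) ∧ IsBb (fseq n)) ∧
        (∀ n, ∀ x, laplaceOp (kseq n) 1 (fun y => useq n y - fseq n y) x = useq n x) ∧
        (∃ C : ℝ, ∀ n, ∀ x, |useq n x| ≤ C ∧ |fseq n x| ≤ C) ∧
        (∀ x, Tendsto (fun n => useq n x) atTop (𝓝 (u x))) ∧
        (∀ x, Tendsto (fun n => fseq n x) atTop (𝓝 (f x))) := by
  constructor
  · intro hR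
    have hgBb : IsBb fun y => u y - f y := hu.sub' hf
    obtain ⟨Cg, hCg0, hCgb⟩ := hgBb.bound
    choose Gseq hGm hGE using fun n => exists_kOp_ext (kseq n) ((hsg n).2.2.2 _ hgBb)
    obtain ⟨Glim, hGlm, hGlE⟩ := exists_kOp_ext klim (hlimsg.2.2.2 _ hgBb)
    have hbnd : ∀ n x, |laplaceOp (kseq n) 1 (fun y => u y - f y) x| ≤ Cg * M :=
      fun n => abs_laplace_le (hsg n).2.1 hCg0 hCgb
    have hten : ∀ x, Tendsto (fun n => laplaceOp (kseq n) 1 (fun y => u y - f y) x) atTop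
        (𝓝 (u x)) := by
      intro x
      have := laplace_tendsto (M := M) (fun n => (hsg n).2.1) hCg0 (fun _ => hCgb)
        hGm hGE hGlE x (fun t ht => hlim _ hgBb t ht x)
      rwa [hR x] at this
    refine ⟨fun n => laplaceOp (kseq n) 1 (fun y => u y - f y),
      fun n x => laplaceOp (kseq n) 1 (fun y => u y - f y) x - (u x - f x),
      ?_, ?_, ?_, ?_, ?_⟩
    · intro n
      have hm : Measurable fun x => laplaceOp (kseq n) 1 (fun y => u y - f y) x :=
        measurable_laplace (hGm n) (hGE n)
      exact ⟨⟨hm, Cg * M, hbnd n⟩, ⟨hm.sub (hu.1.sub hf.1), Cg * M + Cg,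
        fun x => (abs_sub _ _).trans (add_le_add (hbnd n x) (hCgb x))⟩⟩
    · intro n x
      have hfun : (fun y => laplaceOp (kseq n) 1 (fun y => u y - f y) y
          - (laplaceOp (kseq n) 1 (fun y => u y - f y) y - (u y - f y)))
          = fun y => u y - f y := funext fun y => by ring
      rw [hfun]
    · exact ⟨Cg * M + Cg, fun n x =>
        ⟨le_trans (hbnd n x) (le_add_of_nonneg_right hCg0),
         (abs_sub _ _).trans (add_le_add (hbnd n x) (hCgb x))⟩⟩
    · exact hten
    · intro x
      have := (hten x).sub (tendsto_const_nhds (x := u x - f x))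
      simpa [sub_sub_cancel] using this
  · rintro ⟨useq, fseq, hBb, hgen, ⟨C0, hC0⟩, huconv, hfconv⟩
    intro x
    have hgBb : IsBb fun y => u y - f y := hu.sub' hf
    obtain ⟨Cg, hCg0, hCgb⟩ := hgBb.bound
    set C := max (max C0 0 + max C0 0) Cg with hC
    have hCnn : 0 ≤ C := le_trans hCg0 (le_max_right _ _)
    have hgseqBb : ∀ n, IsBb fun y => useq n y - fseq n y := fun n => (hBb n).1.sub' (hBb n).2
    have hgseqb : ∀ n y, |useq n y - fseq n y| ≤ C := by
      intro n y
      refine le_trans ((abs_sub _ _).trans (add_le_add ?_ ?_)) (le_max_left _ _)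
      · exact le_trans ((hC0 n y).1) (le_max_left _ _)
      · exact le_trans ((hC0 n y).2) (le_max_left _ _)
    have hgb : ∀ y, |u y - f y| ≤ C := fun y => le_trans (hCgb y) (le_max_right _ _)
    choose Gseq hGm hGE using fun n => exists_kOp_ext (kseq n) ((hsg n).2.2.2 _ (hgseqBb n))
    obtain ⟨Glim, hGlm, hGlE⟩ := exists_kOp_ext klim (hlimsg.2.2.2 _ hgBb)
    have hdom : ∀ n t, 0 < t → ∀ x, kseq n t x ≤ klim t x :=
      fun n t ht x => kseq_le_klim hsg hmono hlimsg hlim n t ht x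
    have hconv : ∀ t, 0 < t →
        Tendsto (fun n => kOp (kseq n t) (fun y => useq n y - fseq n y) x) atTop
          (𝓝 (kOp (klim t) (fun y => u y - f y) x)) := by
      intro t ht
      have := integral_tendsto_meas (hlimsg.2.1 t ht x) (fun n => hdom n t ht x)
        (fun n => (hgseqBb n).1) hgseqb hgBb.1 hgb
        (fun y => (huconv y).sub (hfconv y)) (hlim _ hgBb t ht x)
      simpa [kOp] using this
    have hT : Tendsto (fun n => laplaceOp (kseq n) 1 (fun y => useq n y - fseq n y) x) atTop
        (𝓝 (laplaceOp klim 1 (fun y => u y - f y) x)) :=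
      laplace_tendsto (M := M) (fun n => (hsg n).2.1) hCnn hgseqb hGm hGE hGlE x hconv
    have heqn : (fun n => laplaceOp (kseq n) 1 (fun y => useq n y - fseq n y) x)
        = fun n => useq n x := funext fun n => hgen n x
    rw [heqn] at hT
    exact tendsto_nhds_unique hT (huconv x)
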